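/- Let S be a semigroup with a topology τ, and let G ⊆ S. Suppose S has Property X with respect to G: for every s ∈ S there exist f, g ∈ S and t ∈ G with s = f t g such that for every τ-neighbourhood U of t, the set f (U ∩ G) g = {f u g : u ∈ U ∩ G} is a τ-neighbourhood of s. If G is a subsemigroup of S and every semigroup homomorphism from G (with the subspace topology) to a topological semigroup T in a class C is continuous, then every semigroup homomorphism from S to a member of C is continuous. -/
import Mathlib


universe u v

/-- Property X transfer for automatic continuity. If a topological semigroup S
has Property X with respect to a subsemigroup G, and every semigroup homomorphism from G
(with the subspace topology) to a topological semigroup in the class C is continuous, then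
every semigroup homomorphism from S to a member of C is continuous. -/
theorem stmt_5 {S : Type v} [Semigroup S] [TopologicalSpace S]
    (G : Set S) (hGsub : ∀ a ∈ G, ∀ b ∈ G, a * b ∈ G)
    (hX : ∀ s : S, ∃ f g : S, ∃ t ∈ G, s = f * t * g ∧
      ∀ U ∈ nhds t, (fun u => f * u * g) '' (U ∩ G) ∈ nhds s)
    (C : (T : Type u) → [Semigroup T] → [TopologicalSpace T] → Prop)
    (hAC : ∀ (T : Type u) [Semigroup T] [TopologicalSpace T], ContinuousMul T → C T →
      ∀ θ : ↥G → T,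
        (∀ a b : ↥G, θ ⟨(a : S) * (b : S), hGsub _ a.2 _ b.2⟩ = θ a * θ b) →
        Continuous θ) :
    ∀ (T : Type u) [Semigroup T] [TopologicalSpace T], ContinuousMul T → C T →
      ∀ θ : S →ₙ* T, Continuous θ := by
  intro T _ _ hTmul hTC θ
  -- restriction of θ to G is continuous
  have hθG : Continuous (fun a : ↥G => θ (a : S)) :=
    hAC T hTmul hTC (fun a : ↥G => θ (a : S)) (fun a b => by simp [map_mul])
  rw [continuous_iff_continuousAt]
  intro s
  obtain ⟨f, g, t, htG, hs, hU⟩ := hX s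
  intro V hV
  -- ψ : G → T
  have hψ : Continuous (fun u : ↥G => θ f * θ (u : S) * θ g) := by
    exact (continuous_const.mul hθG).mul continuous_const
  have hψt : (fun u : ↥G => θ f * θ (u : S) * θ g) ⟨t, htG⟩ = θ s := by
    simp [hs, map_mul]
  have hmem : (fun u : ↥G => θ f * θ (u : S) * θ g) ⁻¹' V ∈ nhds (⟨t, htG⟩ : ↥G) := by
    have := hψ.continuousAt (x := (⟨t, htG⟩ : ↥G))
    exact this (hψt ▸ hV)
  rw [nhds_subtype] at hmem
  obtain ⟨U, hUnhds, hUsub⟩ := hmem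
  have himg := hU U hUnhds
  rw [Filter.mem_map]
  refine Filter.mem_of_superset himg ?_
  rintro x ⟨u, ⟨huU, huG⟩, rfl⟩
  have : (⟨u, huG⟩ : ↥G) ∈ (fun u : ↥G => θ f * θ (u : S) * θ g) ⁻¹' V :=
    hUsub huU
  simpa [map_mul] using this
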